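/- Let 0 < ν < 1, β = ν²/(1−ν²), γ = ν/(1−ν²), r_T, ρ_T, ρ_A > 0, R = r_T + ρ_T. Suppose τ satisfies ρ_T − ν·ρ_A/(1 + ν) ≤ ν·τ ≤ R (i.e., τ ≥ τ₂* := ρ_T/ν − ρ_A/(1+ν) and R − ντ ≥ 0). Then for every angle θ and every entry angle θ_A0, the Apollonius-circle center x_C = (R − ν·τ)·û(θ_A0) − β·ρ_A·û(θ) satisfies ‖x_C‖ ≤ r_T + γ·ρ_A. -/

import Mathlib

open Real

/-- Unit vector at angle `θ` in the Euclidean plane. -/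
noncomputable def uhat (θ : ℝ) : EuclideanSpace ℝ (Fin 2) :=
  !₂[Real.cos θ, Real.sin θ]

lemma uhat_norm (θ : ℝ) : ‖uhat θ‖ = 1 := by
  have : ‖uhat θ‖ ^ 2 = 1 := by
    rw [uhat, EuclideanSpace.norm_eq]
    rw [Real.sq_sqrt (by positivity)]
    simp [Fin.sum_univ_two, sq_abs]
  nlinarith [norm_nonneg (uhat θ)]

/-- If engagement begins no earlier than the critical time `τ₂* = ρ_T/ν − ρ_A/(1+ν)`
(equivalently `ρ_T − νρ_A/(1+ν) ≤ ντ`) while `ντ ≤ R`, then for every engagement angle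
`θ` and every entry angle `θ_A0`, the Apollonius-circle center
`x_C = (R − ντ)û(θ_A0) − βρ_A û(θ)` satisfies `‖x_C‖ ≤ r_T + γρ_A`:
the Apollonius circle reaches into the target disk regardless of the angle. -/
theorem breaching_after_critical_time_tau2
    (ν r_T ρ_T ρ_A τ : ℝ) (hν0 : 0 < ν) (hν1 : ν < 1)
    (hrT : 0 < r_T) (hρT : 0 < ρ_T) (hρA : 0 < ρ_A)
    (R β γ : ℝ) (hR : R = r_T + ρ_T)
    (hβ : β = ν ^ 2 / (1 - ν ^ 2)) (hγ : γ = ν / (1 - ν ^ 2))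
    (hτ : ρ_T - ν * ρ_A / (1 + ν) ≤ ν * τ) (hτR : ν * τ ≤ R) :
    ∀ θ θ_A0 : ℝ,
      ‖((R - ν * τ) • uhat θ_A0 - (β * ρ_A) • uhat θ : EuclideanSpace ℝ (Fin 2))‖ ≤
        r_T + γ * ρ_A := by
  intro θ θ_A0
  have h1 : 0 < 1 - ν ^ 2 := by nlinarith
  have hb : 0 ≤ β * ρ_A := by
    rw [hβ]; positivity
  have ha : 0 ≤ R - ν * τ := by linarith
  calc ‖((R - ν * τ) • uhat θ_A0 - (β * ρ_A) • uhat θ : EuclideanSpace ℝ (Fin 2))‖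
      ≤ ‖(R - ν * τ) • uhat θ_A0‖ + ‖(β * ρ_A) • uhat θ‖ := norm_sub_le _ _
    _ = (R - ν * τ) + β * ρ_A := by
        rw [norm_smul, norm_smul, uhat_norm, uhat_norm, Real.norm_eq_abs,
          Real.norm_eq_abs, abs_of_nonneg ha, abs_of_nonneg hb]; ring
    _ ≤ r_T + γ * ρ_A := by
        have key : γ * ρ_A - β * ρ_A = ν * ρ_A / (1 + ν) := by
          rw [hγ, hβ]
          have : 1 - ν ^ 2 = (1 - ν) * (1 + ν) := by ring
          field_simp
          ring
        linarith [hτ, key, hR ▸ hτR]
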